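/- arXiv:2304.13555 — 4 statements merged into one kernel-verified Lean document; each statement's English description precedes it below -/
import Mathlib

section
/- Let C be an n×n complex matrix such that C·Cᵀ has n distinct eigenvalues. Then rank(C·Cᵀ) = rank(C). -/
open Matrix Polynomial

theorem stmt0 {n : ℕ} (C : Matrix (Fin n) (Fin n) ℂ)
    (h : (Matrix.charpoly (C * Cᵀ)).roots.toFinset.card = n) :
    (C * Cᵀ).rank = C.rank := by
  set M := C * Cᵀ with hM
  -- the charpoly has n distinct roots, so 0 occurs with multiplicity ≤ 1
  have hdeg : M.charpoly.natDegree = n := by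
    simp [Matrix.charpoly_natDegree_eq_dim M]
  have hcard : Multiset.card M.charpoly.roots = n := by
    have hs : Multiset.card M.charpoly.roots = M.charpoly.natDegree :=
      Polynomial.splits_iff_card_roots.mp (IsAlgClosed.splits _)
    rw [hs, hdeg]
  have hnodup : M.charpoly.roots.Nodup := by
    rw [← Multiset.toFinset_card_eq_card_iff_nodup, h, hcard]
  have htd : M.charpoly.natTrailingDegree ≤ 1 := by
    rw [← Polynomial.rootMultiplicity_eq_natTrailingDegree', ← Polynomial.count_roots]
    exact Multiset.nodup_iff_count_le_one.mp hnodup 0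
  -- translate to the endomorphism φ = mulVecLin M
  set φ : Module.End ℂ (Fin n → ℂ) := M.mulVecLin with hφ
  have hφtl : φ = Matrix.toLin' M :=
    LinearMap.ext fun v => by simp [hφ, Matrix.toLin'_apply]
  have hcp : φ.charpoly = M.charpoly := by
    conv_lhs => rw [← φ.charpoly_toMatrix (Pi.basisFun ℂ (Fin n))]
    rw [LinearMap.toMatrix_eq_toMatrix', hφtl, LinearMap.toMatrix'_toLin']
  -- nullity of M is at most 1
  have hker : Module.finrank ℂ (LinearMap.ker φ) ≤ 1 := by
    calc Module.finrank ℂ (LinearMap.ker φ)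
        ≤ Module.finrank ℂ (φ.maxGenEigenspace 0) := by
          apply Submodule.finrank_mono
          rw [← Module.End.eigenspace_zero φ]
          exact φ.genEigenspace_le_maximal 0 1
      _ = φ.charpoly.natTrailingDegree := LinearMap.finrank_maxGenEigenspace_zero_eq φ
      _ ≤ 1 := by rw [hcp]; exact htd
  -- rank-nullity for M and C
  have hrnM : M.rank + Module.finrank ℂ (LinearMap.ker φ) = n := by
    have := LinearMap.finrank_range_add_finrank_ker φ
    simpa [Matrix.rank, hφ, Module.finrank_fin_fun] using this
  have hrnC : C.rank + Module.finrank ℂ (LinearMap.ker C.mulVecLin) = n := by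
    have := LinearMap.finrank_range_add_finrank_ker C.mulVecLin
    simpa [Matrix.rank, Module.finrank_fin_fun] using this
  have hMC : M.rank ≤ C.rank := Matrix.rank_mul_le_left C Cᵀ
  rcases Nat.le_one_iff_eq_zero_or_eq_one.mp hker with h0 | h1
  · -- M has full rank
    have : M.rank = n := by omega
    omega
  · -- nullity of M is 1: then det M = 0, so det C = 0, so C has nullity ≥ 1
    have hkerM : LinearMap.ker φ ≠ ⊥ := by
      intro hb
      rw [hb] at h1
      simp at h1
    obtain ⟨v, hv, hv0⟩ := Submodule.exists_mem_ne_zero_of_ne_bot hkerM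
    have hdetM : M.det = 0 := by
      rw [← Matrix.exists_mulVec_eq_zero_iff]
      exact ⟨v, hv0, by simpa [hφ] using hv⟩
    have hdetC : C.det = 0 := by
      have h2 : M.det = C.det * C.det := by
        rw [hM, Matrix.det_mul, Matrix.det_transpose]
      exact mul_self_eq_zero.mp (h2 ▸ hdetM)
    obtain ⟨w, hw0, hw⟩ := (Matrix.exists_mulVec_eq_zero_iff).mpr hdetC
    have hkerC : 1 ≤ Module.finrank ℂ (LinearMap.ker C.mulVecLin) := by
      have hne : LinearMap.ker C.mulVecLin ≠ ⊥ := by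
        intro hb
        have : w = 0 := by
          have : w ∈ LinearMap.ker C.mulVecLin := by simpa using hw
          rwa [hb, Submodule.mem_bot] at this
        exact hw0 this
      have : Nontrivial (LinearMap.ker C.mulVecLin) :=
        Submodule.nontrivial_iff_ne_bot.mpr hne
      exact Module.finrank_pos
    omega
end

section
/- Let R₁, R₂ be matrices in SO(3,ℝ) such that R₁·C·R₂ᵀ is diagonal for every diagonal 3×3 real matrix C. Then R₁ and R₂ are signed permutation matrices with R₁ = E₁·P and R₂ = E₂·P for diagonal matrices E₁, E₂ with entries in {±1} and a common permutation matrix P. -/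
open Matrix

theorem stmt5 (R₁ R₂ : Matrix (Fin 3) (Fin 3) ℝ)
    (h₁ : R₁ᵀ * R₁ = 1) (hd₁ : R₁.det = 1)
    (h₂ : R₂ᵀ * R₂ = 1) (hd₂ : R₂.det = 1)
    (h : ∀ C : Matrix (Fin 3) (Fin 3) ℝ, C.IsDiag → (R₁ * C * R₂ᵀ).IsDiag) :
    ∃ (ε₁ ε₂ : Fin 3 → ℝ) (σ : Equiv.Perm (Fin 3)),
      (∀ i, ε₁ i = 1 ∨ ε₁ i = -1) ∧ (∀ i, ε₂ i = 1 ∨ ε₂ i = -1) ∧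
      R₁ = Matrix.diagonal ε₁ * σ.permMatrix ℝ ∧
      R₂ = Matrix.diagonal ε₂ * σ.permMatrix ℝ := by
  classical
  have orth₁ : ∀ k k' : Fin 3, ∑ i, R₁ i k * R₁ i k' = if k = k' then (1:ℝ) else 0 := by
    intro k k'
    have := congrFun (congrFun h₁ k) k'
    simpa [Matrix.mul_apply, Matrix.transpose_apply, Matrix.one_apply] using this
  have orth₂ : ∀ k k' : Fin 3, ∑ i, R₂ i k * R₂ i k' = if k = k' then (1:ℝ) else 0 := by
    intro k k'
    have := congrFun (congrFun h₂ k) k'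
    simpa [Matrix.mul_apply, Matrix.transpose_apply, Matrix.one_apply] using this
  have key : ∀ (k i j : Fin 3), i ≠ j → R₁ i k * R₂ j k = 0 := by
    intro k i j hij
    have hC := h (diagonal (fun m => if m = k then (1:ℝ) else 0)) (isDiag_diagonal _)
    have h0 := hC hij
    have hval : (R₁ * diagonal (fun m => if m = k then (1:ℝ) else 0) * R₂ᵀ) i j
        = R₁ i k * R₂ j k := by
      simp [Matrix.mul_apply, Matrix.diagonal_apply, Matrix.transpose_apply,
        mul_ite, ite_mul, Finset.sum_ite_eq, Finset.sum_ite_eq']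
    simpa [hval] using h0
  have colnz₁ : ∀ k, ∃ i, R₁ i k ≠ 0 := by
    intro k
    by_contra hc
    push_neg at hc
    have := orth₁ k k
    simp [hc] at this
  have colnz₂ : ∀ k, ∃ i, R₂ i k ≠ 0 := by
    intro k
    by_contra hc
    push_neg at hc
    have := orth₂ k k
    simp [hc] at this
  have struct : ∀ k, ∃ i, R₁ i k ≠ 0 ∧ R₂ i k ≠ 0 ∧
      ∀ j, j ≠ i → R₁ j k = 0 ∧ R₂ j k = 0 := by
    intro k
    obtain ⟨i, hi⟩ := colnz₁ k
    have hz2 : ∀ j, j ≠ i → R₂ j k = 0 := by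
      intro j hj
      rcases mul_eq_zero.mp (key k i j (Ne.symm hj)) with h' | h'
      · exact absurd h' hi
      · exact h'
    have hi2 : R₂ i k ≠ 0 := by
      obtain ⟨i', hi'⟩ := colnz₂ k
      by_cases hii : i' = i
      · exact hii ▸ hi'
      · exact absurd (hz2 i' hii) hi'
    have hz1 : ∀ j, j ≠ i → R₁ j k = 0 := by
      intro j hj
      rcases mul_eq_zero.mp (key k j i hj) with h' | h'
      · exact h'
      · exact absurd h' hi2
    exact ⟨i, hi, hi2, fun j hj => ⟨hz1 j hj, hz2 j hj⟩⟩
  choose r hr1 hr2 hrz using struct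
  have rinj : Function.Injective r := by
    intro k k' hkk
    by_contra hne
    have horth := orth₁ k k'
    rw [if_neg hne] at horth
    have hsum : ∑ i, R₁ i k * R₁ i k' = R₁ (r k) k * R₁ (r k) k' := by
      apply Finset.sum_eq_single
      · intro b _ hb
        rw [(hrz k b hb).1, zero_mul]
      · intro hb
        exact absurd (Finset.mem_univ _) hb
    rw [hsum] at horth
    have h2 : R₁ (r k) k' ≠ 0 := by rw [hkk]; exact hr1 k'
    exact (mul_ne_zero (hr1 k) h2) horth
  have rbij : Function.Bijective r := Finite.injective_iff_bijective.mp rinj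
  set e : Equiv.Perm (Fin 3) := Equiv.ofBijective r rbij with he
  set σ : Equiv.Perm (Fin 3) := e.symm with hσ
  have hre : ∀ k, e k = r k := fun k => rfl
  have hrσ : ∀ i, r (σ i) = i := fun i => by
    rw [← hre]; exact e.apply_symm_apply i
  have hperm : ∀ i j : Fin 3, (σ.permMatrix ℝ) i j = if σ i = j then (1:ℝ) else 0 := by
    intro i j
    simp [Equiv.Perm.permMatrix, PEquiv.toMatrix_apply, Equiv.toPEquiv_apply, eq_comm]
  have sign : ∀ (R : Matrix (Fin 3) (Fin 3) ℝ),
      (∀ k k' : Fin 3, ∑ i, R i k * R i k' = if k = k' then (1:ℝ) else 0) →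
      (∀ k j, j ≠ r k → R j k = 0) →
      ∀ i, R i (σ i) = 1 ∨ R i (σ i) = -1 := by
    intro R ho hz i
    have hcol := ho (σ i) (σ i)
    rw [if_pos rfl] at hcol
    have hsum : ∑ m, R m (σ i) * R m (σ i) = R i (σ i) * R i (σ i) := by
      apply Finset.sum_eq_single
      · intro b _ hb
        rw [hz (σ i) b (by rw [hrσ]; exact hb), zero_mul]
      · intro hb
        exact absurd (Finset.mem_univ _) hb
    rw [hsum] at hcol
    exact mul_self_eq_one_iff.mp hcol
  have decomp : ∀ (R : Matrix (Fin 3) (Fin 3) ℝ),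
      (∀ k j, j ≠ r k → R j k = 0) →
      R = Matrix.diagonal (fun i => R i (σ i)) * σ.permMatrix ℝ := by
    intro R hz
    ext i j
    rw [Matrix.diagonal_mul, hperm]
    by_cases hij : σ i = j
    · rw [if_pos hij, mul_one, hij]
    · rw [if_neg hij, mul_zero]
      apply hz j i
      intro hc
      apply hij
      rw [hc, ← hre]
      exact e.symm_apply_apply j
  refine ⟨fun i => R₁ i (σ i), fun i => R₂ i (σ i), σ,
    sign R₁ orth₁ (fun k j hj => (hrz k j hj).1) ,
    sign R₂ orth₂ (fun k j hj => (hrz k j hj).2) ,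
    decomp R₁ (fun k j hj => (hrz k j hj).1),
    decomp R₂ (fun k j hj => (hrz k j hj).2)⟩
end

section
/- Let C₁, C₂ be diagonal 3×3 complex matrices such that C₂² has distinct diagonal entries, and suppose R₁·C₁·R₂ᵀ = C₂ for R₁, R₂ in SO(3,ℂ). Then R₁·C₁²·R₁ᵀ = C₂² and R₂·C₁²·R₂ᵀ = C₂², and consequently R₁ and R₂ are signed permutation matrices. -/
open Matrix

/-- A complex signed permutation matrix: a product of a diagonal matrix with entries `±1`
and a permutation matrix. -/
def IsSignedPermC (R : Matrix (Fin 3) (Fin 3) ℂ) : Prop :=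
  ∃ (ε : Fin 3 → ℂ) (σ : Equiv.Perm (Fin 3)),
    (∀ i, ε i = 1 ∨ ε i = -1) ∧ R = Matrix.diagonal ε * σ.permMatrix ℂ

lemma key_lemma (R D E : Matrix (Fin 3) (Fin 3) ℂ)
    (hD : D.IsDiag) (hE : E.IsDiag)
    (hdist : ∀ i j : Fin 3, i ≠ j → E i i ≠ E j j)
    (hR : R * Rᵀ = 1) (hcon : R * D * Rᵀ = E) :
    ∃ (ε : Fin 3 → ℂ) (σ : Equiv.Perm (Fin 3)),
      (∀ i, ε i = 1 ∨ ε i = -1) ∧ R = Matrix.diagonal ε * σ.permMatrix ℂ := by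
  have hR' : Rᵀ * R = 1 := mul_eq_one_comm.mp hR
  have hRD : R * D = E * R := by
    calc R * D = R * D * (Rᵀ * R) := by rw [hR', mul_one]
    _ = (R * D * Rᵀ) * R := by simp only [Matrix.mul_assoc]
    _ = E * R := by rw [hcon]
  have key : ∀ i j, R i j * D j j = E i i * R i j := by
    intro i j
    have h1 := congrFun (congrFun hRD i) j
    rw [Matrix.mul_apply, Matrix.mul_apply] at h1
    rw [Finset.sum_eq_single j (fun k _ hk => by rw [hD hk, mul_zero])
      (by simp)] at h1
    rw [Finset.sum_eq_single i (fun k _ hk => by rw [hE hk.symm, zero_mul])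
      (by simp)] at h1
    exact h1
  have colsum : ∀ j j', (∑ i, R i j * R i j') = (1 : Matrix (Fin 3) (Fin 3) ℂ) j j' := by
    intro j j'
    have := congrFun (congrFun hR' j) j'
    rw [Matrix.mul_apply] at this
    simpa [Matrix.transpose_apply, mul_comm] using this
  have colnz : ∀ j, ∃ i, R i j ≠ 0 := by
    intro j
    by_contra hc
    push_neg at hc
    have := colsum j j
    simp [hc] at this
  have uniq : ∀ j i i', R i j ≠ 0 → R i' j ≠ 0 → i = i' := by
    intro j i i' hi hi'
    by_contra hne
    have e1 : D j j = E i i := mul_left_cancel₀ hi (by rw [key i j, mul_comm])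
    have e2 : D j j = E i' i' := mul_left_cancel₀ hi' (by rw [key i' j, mul_comm])
    exact hdist i i' hne (e1.symm.trans e2)
  choose τ hτ using colnz
  have hzero : ∀ i j, i ≠ τ j → R i j = 0 := by
    intro i j hne
    by_contra hc
    exact hne (uniq j i (τ j) hc (hτ j))
  have hinj : Function.Injective τ := by
    intro j j' hjj
    by_contra hne
    have := colsum j j'
    rw [Finset.sum_eq_single (τ j) (fun k _ hk => by rw [hzero k j hk, zero_mul])
      (by simp)] at this
    rw [hjj] at this
    simp [hne] at this
    rcases this with h | h
    · exact hτ j (hjj ▸ h)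
    · exact hτ j' h
  have hbij : Function.Bijective τ := Finite.injective_iff_bijective.mp hinj
  set e := Equiv.ofBijective τ hbij with he
  refine ⟨fun i => R i (e.symm i), e.symm, ?_, ?_⟩
  · intro i
    have hti : τ (e.symm i) = i := e.apply_symm_apply i
    have h1 := colsum (e.symm i) (e.symm i)
    rw [Finset.sum_eq_single i (fun k _ hk => by
        rw [hzero k (e.symm i) (by rw [hti]; exact hk), zero_mul])
      (by simp)] at h1
    simp at h1
    exact mul_self_eq_one_iff.mp h1
  · ext i j
    rw [Matrix.diagonal_mul]
    simp only [Equiv.Perm.permMatrix, PEquiv.toMatrix_apply, Equiv.toPEquiv_apply,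
      Option.mem_def, Option.some_inj]
    by_cases hij : e.symm i = j
    · rw [if_pos hij, mul_one, ← hij]
    · rw [if_neg hij, mul_zero]
      apply hzero
      intro hc
      exact hij (by rw [hc]; exact e.symm_apply_apply j)

theorem stmt7 (C₁ C₂ R₁ R₂ : Matrix (Fin 3) (Fin 3) ℂ)
    (hC₁ : C₁.IsDiag) (hC₂ : C₂.IsDiag)
    (hdist : ∀ i j : Fin 3, i ≠ j → (C₂ * C₂) i i ≠ (C₂ * C₂) j j)
    (hR₁ : R₁ * R₁ᵀ = 1) (hdR₁ : R₁.det = 1)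
    (hR₂ : R₂ * R₂ᵀ = 1) (hdR₂ : R₂.det = 1)
    (h : R₁ * C₁ * R₂ᵀ = C₂) :
    R₁ * (C₁ * C₁) * R₁ᵀ = C₂ * C₂ ∧
    R₂ * (C₁ * C₁) * R₂ᵀ = C₂ * C₂ ∧
    IsSignedPermC R₁ ∧ IsSignedPermC R₂ := by
  have hR₁' : R₁ᵀ * R₁ = 1 := mul_eq_one_comm.mp hR₁
  have hR₂' : R₂ᵀ * R₂ = 1 := mul_eq_one_comm.mp hR₂
  have diagT : ∀ (A : Matrix (Fin 3) (Fin 3) ℂ), A.IsDiag → Aᵀ = A := by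
    intro A hA
    ext i j
    by_cases hij : i = j
    · subst hij; rfl
    · rw [Matrix.transpose_apply, hA hij, hA (Ne.symm hij)]
  have hC₁T : C₁ᵀ = C₁ := diagT _ hC₁
  have hC₂T : C₂ᵀ = C₂ := diagT _ hC₂
  have hT : R₂ * C₁ * R₁ᵀ = C₂ := by
    have h' := congrArg Matrix.transpose h
    rw [Matrix.transpose_mul, Matrix.transpose_mul, Matrix.transpose_transpose,
      hC₁T, hC₂T] at h'
    simpa [Matrix.mul_assoc] using h'
  have h1 : R₁ * (C₁ * C₁) * R₁ᵀ = C₂ * C₂ := by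
    calc R₁ * (C₁ * C₁) * R₁ᵀ = (R₁ * C₁ * R₂ᵀ) * (R₂ * C₁ * R₁ᵀ) := by
          simp only [Matrix.mul_assoc]
          rw [← Matrix.mul_assoc R₂ᵀ R₂, hR₂', Matrix.one_mul]
    _ = C₂ * C₂ := by rw [h, hT]
  have h2 : R₂ * (C₁ * C₁) * R₂ᵀ = C₂ * C₂ := by
    calc R₂ * (C₁ * C₁) * R₂ᵀ = (R₂ * C₁ * R₁ᵀ) * (R₁ * C₁ * R₂ᵀ) := by
          simp only [Matrix.mul_assoc]
          rw [← Matrix.mul_assoc R₁ᵀ R₁, hR₁', Matrix.one_mul]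
    _ = C₂ * C₂ := by rw [h, hT]
  have diagMul : ∀ (A : Matrix (Fin 3) (Fin 3) ℂ), A.IsDiag → (A * A).IsDiag := by
    intro A hA i j hij
    rw [Matrix.mul_apply]
    apply Finset.sum_eq_zero
    intro k _
    by_cases hk : k = i
    · subst hk; rw [hA hij, mul_zero]
    · rw [hA (Ne.symm hk), zero_mul]
  have hDdiag : (C₁ * C₁).IsDiag := diagMul _ hC₁
  have hEdiag : (C₂ * C₂).IsDiag := diagMul _ hC₂
  exact ⟨h1, h2, key_lemma R₁ (C₁ * C₁) (C₂ * C₂) hDdiag hEdiag hdist hR₁ h1,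
    key_lemma R₂ (C₁ * C₁) (C₂ * C₂) hDdiag hEdiag hdist hR₂ h2⟩
end

section
/- The functions t₂(C) = tr(C·Cᵀ), t₃(C) = det(C), t₄(C) = tr((C·Cᵀ)²) on the space of 3×3 real matrices are algebraically independent over ℝ. -/
open Matrix

open MvPolynomial in
private lemma key_complex (p d q : ℝ) (hd : d ≠ 0) :
    ∃ x y z : ℂ, x^2+y^2+z^2 = (p:ℂ) ∧ x*y*z = (d:ℂ) ∧ x^4+y^4+z^4 = (q:ℂ) := by
  -- a nonzero root of the sextic 2T⁶-2pT⁴+(p²-q)T²-2d²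
  set Q : Polynomial ℂ := Polynomial.C 2 * Polynomial.X^6
      - Polynomial.C (2*(p:ℂ)) * Polynomial.X^4 + Polynomial.C ((p:ℂ)^2-(q:ℂ)) * Polynomial.X^2
      - Polynomial.C (2*(d:ℂ)^2) with hQ
  have hdeg : Q.degree = 6 := by
    rw [hQ]; compute_degree!
  obtain ⟨a, haroot⟩ := Complex.exists_root (f := Q) (by rw [hdeg]; decide)
  have hS : 2*a^6 - 2*(p:ℂ)*a^4 + ((p:ℂ)^2-(q:ℂ))*a^2 - 2*(d:ℂ)^2 = 0 := by
    simpa [hQ, Polynomial.IsRoot] using haroot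
  have ha : a ≠ 0 := by
    rintro rfl
    simp only [ne_eq, OfNat.ofNat_ne_zero, not_false_eq_true, zero_pow, mul_zero, sub_zero,
      add_zero, zero_sub, neg_eq_zero, mul_eq_zero, pow_eq_zero_iff] at hS
    rcases hS with h | h
    · norm_num at h
    · exact hd (by exact_mod_cast h)
  obtain ⟨s, hs'⟩ := IsAlgClosed.exists_pow_nat_eq (((p:ℂ) - a^2) + 2*((d:ℂ)/a)) (n := 2) two_pos
  obtain ⟨r, hr'⟩ := IsAlgClosed.exists_pow_nat_eq (((p:ℂ) - a^2) - 2*((d:ℂ)/a)) (n := 2) two_pos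
  have hs : a*s^2 = a*((p:ℂ)-a^2)+2*(d:ℂ) := by rw [hs']; field_simp
  have hr : a*r^2 = a*((p:ℂ)-a^2)-2*(d:ℂ) := by rw [hr']; field_simp
  refine ⟨a, (s+r)/2, (s-r)/2, ?_, ?_, ?_⟩
  · have h : a*(a^2 + ((s+r)/2)^2 + ((s-r)/2)^2) = a*(p:ℂ) := by
      linear_combination (1/2)*hs + (1/2)*hr
    exact mul_left_cancel₀ ha h
  · linear_combination (1/4)*hs - (1/4)*hr
  · have hsq : a^2*s^4 = (a*((p:ℂ)-a^2)+2*(d:ℂ))^2 := by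
      linear_combination (a*s^2 + a*((p:ℂ)-a^2)+2*(d:ℂ))*hs
    have hrq : a^2*r^4 = (a*((p:ℂ)-a^2)-2*(d:ℂ))^2 := by
      linear_combination (a*r^2 + a*((p:ℂ)-a^2)-2*(d:ℂ))*hr
    have hmid : a^2*s^2*r^2 = (a*((p:ℂ)-a^2))^2 - 4*(d:ℂ)^2 := by
      linear_combination (a*r^2)*hs + (a*((p:ℂ)-a^2)+2*(d:ℂ))*hr
    have h : a^2*(a^4 + ((s+r)/2)^4 + ((s-r)/2)^4) = a^2*(q:ℂ) := by
      linear_combination (1/8)*hsq + (1/8)*hrq + (3/4)*hmid + hS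
    exact mul_left_cancel₀ (pow_ne_zero 2 ha) h

theorem stmt12 :
    AlgebraicIndependent ℝ
      (![fun C : Matrix (Fin 3) (Fin 3) ℝ => Matrix.trace (C * Cᵀ),
         fun C : Matrix (Fin 3) (Fin 3) ℝ => C.det,
         fun C : Matrix (Fin 3) (Fin 3) ℝ => Matrix.trace ((C * Cᵀ) ^ 2)] :
        Fin 3 → (Matrix (Fin 3) (Fin 3) ℝ → ℝ)) := by
  classical
  set F : Fin 3 → (Matrix (Fin 3) (Fin 3) ℝ → ℝ) :=
    ![fun C => Matrix.trace (C * Cᵀ), fun C => C.det,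
      fun C => Matrix.trace ((C * Cᵀ) ^ 2)] with hF
  rw [algebraicIndependent_iff]
  intro P hP
  -- Step 1: pointwise vanishing
  have hfun : ∀ C : Matrix (Fin 3) (Fin 3) ℝ,
      MvPolynomial.eval (fun i => F i C) P = 0 := by
    intro C
    have h1 : (Pi.evalAlgHom ℝ (fun _ : Matrix (Fin 3) (Fin 3) ℝ => ℝ) C).comp
        (MvPolynomial.aeval F) = MvPolynomial.aeval (fun i => F i C) := by
      apply MvPolynomial.algHom_ext
      intro i
      simp
    have h2 : (Pi.evalAlgHom ℝ (fun _ : Matrix (Fin 3) (Fin 3) ℝ => ℝ) C).comp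
        (MvPolynomial.aeval F) P = 0 := by
      simp [hP]
    rw [h1] at h2
    exact h2
  -- Step 2: evaluate on diagonal matrices
  have hdiag : ∀ x y z : ℝ,
      MvPolynomial.eval ![x^2+y^2+z^2, x*y*z, x^4+y^4+z^4] P = 0 := by
    intro x y z
    have h := hfun (Matrix.diagonal ![x, y, z])
    have he : (fun i => F i (Matrix.diagonal ![x, y, z]))
        = ![x^2+y^2+z^2, x*y*z, x^4+y^4+z^4] := by
      funext i
      fin_cases i <;>
        simp [hF, Matrix.diagonal_transpose, Matrix.diagonal_mul_diagonal,
          Matrix.diagonal_pow, Matrix.trace_diagonal, Fin.sum_univ_three,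
          Matrix.det_diagonal, Fin.prod_univ_three] <;> ring
    rwa [he] at h
  -- Step 3: the polynomial identity over ℝ
  set S : Fin 3 → MvPolynomial (Fin 3) ℝ :=
    ![MvPolynomial.X 0^2 + MvPolynomial.X 1^2 + MvPolynomial.X 2^2,
      MvPolynomial.X 0 * MvPolynomial.X 1 * MvPolynomial.X 2,
      MvPolynomial.X 0^4 + MvPolynomial.X 1^4 + MvPolynomial.X 2^4] with hSdef
  have hG : MvPolynomial.aeval S P = 0 := by
    apply MvPolynomial.funext
    intro v
    have h1 : (MvPolynomial.aeval v : MvPolynomial (Fin 3) ℝ →ₐ[ℝ] ℝ).comp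
        (MvPolynomial.aeval S) = MvPolynomial.aeval (fun i => MvPolynomial.aeval v (S i)) := by
      apply MvPolynomial.algHom_ext
      intro i
      simp
    have h2 : (fun i => MvPolynomial.aeval v (S i))
        = ![(v 0)^2+(v 1)^2+(v 2)^2, (v 0)*(v 1)*(v 2), (v 0)^4+(v 1)^4+(v 2)^4] := by
      funext i
      fin_cases i <;> simp [hSdef]
    have h3 : MvPolynomial.eval v (MvPolynomial.aeval S P)
        = MvPolynomial.eval ![(v 0)^2+(v 1)^2+(v 2)^2, (v 0)*(v 1)*(v 2),
            (v 0)^4+(v 1)^4+(v 2)^4] P := by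
      have := congrArg (fun φ : MvPolynomial (Fin 3) ℝ →ₐ[ℝ] ℝ => φ P) h1
      simp only [AlgHom.comp_apply] at this
      rw [h2] at this
      exact this
    rw [h3, hdiag (v 0) (v 1) (v 2)]
    simp
  -- Step 4: evaluate the identity over ℂ
  have hC : ∀ x y z : ℂ,
      MvPolynomial.aeval ![x^2+y^2+z^2, x*y*z, x^4+y^4+z^4] P = 0 := by
    intro x y z
    have h1 : ((MvPolynomial.aeval ![x,y,z] : MvPolynomial (Fin 3) ℝ →ₐ[ℝ] ℂ)).comp
        (MvPolynomial.aeval S)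
        = MvPolynomial.aeval (fun i => MvPolynomial.aeval (![x,y,z] : Fin 3 → ℂ) (S i)) := by
      apply MvPolynomial.algHom_ext
      intro i
      simp
    have h2 : (fun i => MvPolynomial.aeval (![x,y,z] : Fin 3 → ℂ) (S i))
        = ![x^2+y^2+z^2, x*y*z, x^4+y^4+z^4] := by
      funext i
      fin_cases i <;> simp [hSdef]
    have h3 := congrArg (fun φ : MvPolynomial (Fin 3) ℝ →ₐ[ℝ] ℂ => φ P) h1
    simp only [AlgHom.comp_apply] at h3
    rw [h2] at h3
    rw [← h3, hG]
    simp
  -- Step 5: vanishing at all real points with second coordinate nonzero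
  have hRC : ∀ p d q : ℝ, d ≠ 0 → MvPolynomial.eval ![p,d,q] P = 0 := by
    intro p d q hd
    obtain ⟨x, y, z, h1, h2, h3⟩ := key_complex p d q hd
    have h := hC x y z
    have he : (![x^2+y^2+z^2, x*y*z, x^4+y^4+z^4] : Fin 3 → ℂ)
        = (algebraMap ℝ ℂ) ∘ ![p,d,q] := by
      funext i
      fin_cases i <;> simp [h1, h2, h3, Complex.coe_algebraMap]
    rw [he] at h
    rw [MvPolynomial.aeval_algebraMap_eq_zero_iff_of_injective (B := ℂ)
      ((algebraMap ℝ ℂ).injective)] at h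
    simpa using h
  -- Step 6: remove the d ≠ 0 condition
  have hR : ∀ p d q : ℝ, MvPolynomial.eval ![p,d,q] P = 0 := by
    intro p d q
    set U : Polynomial ℝ :=
      MvPolynomial.aeval ![Polynomial.C p, Polynomial.X, Polynomial.C q] P with hU
    have hUeval : ∀ e : ℝ, Polynomial.eval e U = MvPolynomial.eval ![p,e,q] P := by
      intro e
      have h1 : (Polynomial.aeval e : Polynomial ℝ →ₐ[ℝ] ℝ).comp
          (MvPolynomial.aeval ![Polynomial.C p, Polynomial.X, Polynomial.C q])
          = MvPolynomial.aeval (![p,e,q] : Fin 3 → ℝ) := by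
        apply MvPolynomial.algHom_ext
        intro i
        fin_cases i <;> simp
      have h2 := congrArg (fun φ : MvPolynomial (Fin 3) ℝ →ₐ[ℝ] ℝ => φ P) h1
      simp only [AlgHom.comp_apply] at h2
      have h3 : Polynomial.aeval e U = Polynomial.eval e U := by
        rw [Polynomial.aeval_def]
        simp [Polynomial.eval₂_eq_eval_map]
      rw [← h3]
      exact h2
    have hU0 : U = 0 := by
      apply Polynomial.eq_zero_of_infinite_isRoot
      apply Set.Infinite.mono (s := {x : ℝ | x ≠ 0})
      · intro e he
        simp only [Set.mem_setOf_eq, Polynomial.IsRoot]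
        rw [hUeval e]
        exact hRC p e q he
      · exact Set.Finite.infinite_compl (Set.finite_singleton 0)
    have := hUeval d
    rw [hU0] at this
    simpa using this.symm
  -- Step 7: conclude P = 0
  have hall : ∀ v : Fin 3 → ℝ, MvPolynomial.eval v P = 0 := by
    intro v
    have h := hR (v 0) (v 1) (v 2)
    have he : (![v 0, v 1, v 2] : Fin 3 → ℝ) = v := by
      funext i
      fin_cases i <;> rfl
    rwa [he] at h
  apply MvPolynomial.funext (q := 0)
  intro v
  simp [hall v]
end
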